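/- Let $(p_j)$ be positive, non-increasing, summable frequencies such that $\lim_{j\to\infty} p_{j+1}/p_j = 1/2$. Then $V(t) = \sum_{j=1}^\infty (e^{-tp_j} - e^{-2tp_j}) \to 1$ as $t \to \infty$. -/

import Mathlib

open Real Filter

-- |e^{-a} - e^{-b}| ≤ |a-b| e^{-c} when c ≤ a, c ≤ b
lemma my_abs_exp_sub_exp {a b c : ℝ} (hca : c ≤ a) (hcb : c ≤ b) :
    |Real.exp (-a) - Real.exp (-b)| ≤ |a - b| * Real.exp (-c) := by
  wlog hab : a ≤ b generalizing a b
  · rw [abs_sub_comm, abs_sub_comm a b]; exact this hcb hca (le_of_not_ge hab)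
  have h1 : Real.exp (-b) ≤ Real.exp (-a) := Real.exp_le_exp.mpr (by linarith)
  rw [abs_of_nonneg (by linarith), abs_sub_comm, abs_of_nonneg (by linarith)]
  have h2 : Real.exp (-b) = Real.exp (-a) * Real.exp (a - b) := by
    rw [← Real.exp_add]; ring_nf
  have h3 : (a - b) + 1 ≤ Real.exp (a - b) := Real.add_one_le_exp _
  have h4 : Real.exp (-a) ≤ Real.exp (-c) := Real.exp_le_exp.mpr (by linarith)
  have h5 : (0:ℝ) < Real.exp (-a) := Real.exp_pos _
  nlinarith

-- x e^{-x} ≤ (5/2)(e^{-y} - e^{-x}) when 0 ≤ x, y ≤ (3/5)x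
lemma my_telescope_bound {x y : ℝ} (_hx : 0 ≤ x) (hy : y ≤ (3/5) * x) :
    x * Real.exp (-x) ≤ (5/2) * (Real.exp (-y) - Real.exp (-x)) := by
  have h2 : Real.exp (-y) = Real.exp (-x) * Real.exp (x - y) := by
    rw [← Real.exp_add]; ring_nf
  have h3 : (x - y) + 1 ≤ Real.exp (x - y) := Real.add_one_le_exp _
  have h5 : (0:ℝ) < Real.exp (-x) := Real.exp_pos _
  nlinarith

lemma my_exp_neg_mul_tendsto {c : ℝ} (hc : 0 < c) :
    Tendsto (fun t : ℝ => Real.exp (-(t * c))) atTop (nhds 0) := by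
  have h1 : Tendsto (fun t : ℝ => t * c) atTop atTop :=
    Tendsto.atTop_mul_const hc tendsto_id
  exact Real.tendsto_exp_atBot.comp (tendsto_neg_atBot_iff.mpr h1)

theorem stmt14 (p : ℕ → ℝ) (hpos : ∀ j, 0 < p j) (hmono : ∀ j, p (j + 1) ≤ p j)
    (hsum : Summable p)
    (hratio : Tendsto (fun j : ℕ => p (j + 1) / p j) atTop (nhds (1 / 2))) :
    Tendsto (fun t : ℝ => ∑' j : ℕ, (Real.exp (-(t * p j)) - Real.exp (-(2 * t * p j))))
      atTop (nhds 1) := by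
  have hp0 : Tendsto p atTop (nhds 0) := hsum.tendsto_atTop_zero
  set q : ℕ → ℝ := fun j => Nat.casesOn j (2 * p 0) p with hqdef
  have hq0 : q 0 = 2 * p 0 := rfl
  have hqs : ∀ k, q (k + 1) = p k := fun k => rfl
  have hqpos : ∀ j, 0 < q j := by
    intro j; cases j with
    | zero => simpa [hq0] using by linarith [hpos 0]
    | succ k => simpa [hqs] using hpos k
  have hqge : ∀ j, p j ≤ q j := by
    intro j; cases j with
    | zero => rw [hq0]; linarith [hpos 0]
    | succ k => rw [hqs]; exact hmono k
  have hqtend : Tendsto q atTop (nhds 0) := by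
    rw [← Filter.tendsto_add_atTop_iff_nat 1]
    simpa [hqs] using hp0
  have hqsum : Summable q := by
    rw [← summable_nat_add_iff 1]
    simpa [hqs] using hsum
  rw [Metric.tendsto_nhds]
  intro ε hε
  set ε₁ : ℝ := min (ε / 20) (1 / 10) with hε₁def
  have hε₁pos : 0 < ε₁ := lt_min (by linarith) (by norm_num)
  have hε₁le : ε₁ ≤ ε / 20 := min_le_left _ _
  have hε₁le' : ε₁ ≤ 1 / 10 := min_le_right _ _
  -- get J from the ratio hypothesis
  have hrr : ∀ᶠ j in atTop, |p (j + 1) / p j - 1 / 2| < ε₁ / 2 := by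
    have := Metric.tendsto_nhds.mp hratio (ε₁ / 2) (by linarith)
    simpa [Real.dist_eq] using this
  obtain ⟨J, hJ⟩ := eventually_atTop.mp hrr
  -- consequences for j ≥ J
  have hA : ∀ j, J ≤ j → |2 * p (j + 1) - p j| ≤ ε₁ * p j := by
    intro j hj
    have h := hJ j hj
    have hpj : (0:ℝ) < p j := hpos j
    have hrel : p (j + 1) = (p (j + 1) / p j) * p j := by field_simp
    rw [hrel]
    have e1 : 2 * (p (j + 1) / p j * p j) - p j = (2 * (p (j + 1) / p j - 1 / 2)) * p j := by
      ring
    rw [e1, abs_mul, abs_mul, abs_of_pos hpj]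
    have : |(2:ℝ)| = 2 := by norm_num
    rw [this]
    nlinarith [abs_nonneg (p (j + 1) / p j - 1 / 2)]
  have hB : ∀ j, J ≤ j → p j / 2 ≤ 2 * p (j + 1) := by
    intro j hj
    have h := abs_le.mp (hA j hj)
    have := hpos j
    nlinarith
  have hC : ∀ j, J ≤ j → p (j + 1) ≤ (3/5) * p j := by
    intro j hj
    have h := abs_le.mp (hA j hj)
    have := hpos j
    nlinarith
  -- head tends to 0
  have hHead : Tendsto (fun t : ℝ => Real.exp (-(2 * t * p 0)) +
      ∑ j ∈ Finset.range (J + 1), (Real.exp (-(t * q j)) + Real.exp (-(2 * t * p j))))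
      atTop (nhds 0) := by
    have h1 : Tendsto (fun t : ℝ => Real.exp (-(2 * t * p 0))) atTop (nhds 0) := by
      have := my_exp_neg_mul_tendsto (c := 2 * p 0) (by linarith [hpos 0])
      simpa [mul_comm, mul_assoc, mul_left_comm] using this
    have h2 : Tendsto (fun t : ℝ => ∑ j ∈ Finset.range (J + 1),
        (Real.exp (-(t * q j)) + Real.exp (-(2 * t * p j)))) atTop (nhds 0) := by
      have : Tendsto (fun t : ℝ => ∑ j ∈ Finset.range (J + 1),
          (Real.exp (-(t * q j)) + Real.exp (-(2 * t * p j)))) atTop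
          (nhds (∑ j ∈ Finset.range (J + 1), (0 + 0 : ℝ))) := by
        apply tendsto_finset_sum
        intro j _
        exact (my_exp_neg_mul_tendsto (hqpos j)).add
          (by simpa [mul_comm, mul_assoc, mul_left_comm] using
            my_exp_neg_mul_tendsto (c := 2 * p j) (by linarith [hpos j]))
      simpa using this
    simpa using h1.add h2
  filter_upwards [hHead.eventually_lt_const (show (0:ℝ) < ε / 2 by linarith),
    eventually_gt_atTop (0:ℝ)] with t hHt ht
  -- now fixed t > 0
  set E : ℕ → ℝ := fun j => Real.exp (-(t * q j)) - Real.exp (-(2 * t * p j)) with hEdef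
  -- summability of |E|
  have hEbound : ∀ j, |E j| ≤ t * q j + 2 * t * p j := by
    intro j
    have h := my_abs_exp_sub_exp (a := t * q j) (b := 2 * t * p j) (c := 0)
      (by nlinarith [hqpos j]) (by nlinarith [hpos j])
    simp only [neg_zero, Real.exp_zero, mul_one] at h
    refine h.trans ?_
    have : |t * q j - 2 * t * p j| ≤ t * q j + 2 * t * p j := by
      rw [abs_sub_le_iff]
      constructor <;> nlinarith [hqpos j, hpos j]
    exact this
  have habsE : Summable (fun j => |E j|) := by
    apply Summable.of_nonneg_of_le (fun j => abs_nonneg _) hEbound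
    exact (hqsum.mul_left t).add (hsum.mul_left (2 * t))
  have hEsum : Summable E := habsE.of_abs
  -- telescoping HasSum
  have hAsum : HasSum (fun j => Real.exp (-(t * p j)) - Real.exp (-(t * q j)))
      (1 - Real.exp (-(2 * t * p 0))) := by
    rw [hasSum_iff_tendsto_nat_of_nonneg]
    · have hps : ∀ n, ∑ j ∈ Finset.range n,
          (Real.exp (-(t * p j)) - Real.exp (-(t * q j)))
          = Real.exp (-(t * q n)) - Real.exp (-(t * q 0)) := by
        intro n
        have := Finset.sum_range_sub (f := fun j => Real.exp (-(t * q j))) n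
        rw [← this]
      simp only [hps, hq0]
      have : Tendsto (fun n => Real.exp (-(t * q n))) atTop (nhds 1) := by
        have h1 : Tendsto (fun n => -(t * q n)) atTop (nhds 0) := by
          simpa using ((hqtend.const_mul t).neg)
        simpa [Function.comp_def] using (Real.continuous_exp.tendsto 0).comp h1
      have := this.sub_const (Real.exp (-(t * (2 * p 0))))
      simpa [mul_comm, mul_assoc, mul_left_comm] using this
    · intro j
      have : t * p j ≤ t * q j := by nlinarith [hqge j, hpos j]
      simp only [sub_nonneg]
      exact Real.exp_le_exp.mpr (by linarith)
  -- decompose the tsum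
  have hdecomp : (∑' j : ℕ, (Real.exp (-(t * p j)) - Real.exp (-(2 * t * p j))))
      = (1 - Real.exp (-(2 * t * p 0))) + ∑' j, E j := by
    rw [← hAsum.tsum_eq, ← Summable.tsum_add hAsum.summable hEsum]
    exact tsum_congr fun j => by simp [hEdef]
  -- tail bound
  have htail : (∑' i : ℕ, |E (i + (J + 1))|) ≤ 5 * ε₁ := by
    apply Real.tsum_le_of_sum_range_le (fun n => abs_nonneg _)
    intro n
    have hterm : ∀ i, |E (i + (J + 1))| ≤
        5 * ε₁ * (Real.exp (-(t / 2 * p (i + J + 1))) - Real.exp (-(t / 2 * p (i + J)))) := by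
      intro i
      have hiJ : J ≤ i + J := Nat.le_add_left _ _
      have e1 : E (i + (J + 1)) =
          Real.exp (-(t * p (i + J))) - Real.exp (-(2 * t * p (i + J + 1))) := rfl
      have habs : |E (i + (J + 1))| ≤
          |t * p (i + J) - 2 * t * p (i + J + 1)| * Real.exp (-(t / 2 * p (i + J))) := by
        rw [e1]
        apply my_abs_exp_sub_exp
        · exact mul_le_mul_of_nonneg_right (by linarith) (hpos (i + J)).le
        · have hb := hB (i + J) hiJ
          calc t / 2 * p (i + J) = t * (p (i + J) / 2) := by ring
            _ ≤ t * (2 * p (i + J + 1)) := mul_le_mul_of_nonneg_left hb ht.le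
            _ = 2 * t * p (i + J + 1) := by ring
      have h2 : |t * p (i + J) - 2 * t * p (i + J + 1)| ≤ ε₁ * (t * p (i + J)) := by
        have := hA (i + J) hiJ
        have e2 : t * p (i + J) - 2 * t * p (i + J + 1)
            = -(t * (2 * p (i + J + 1) - p (i + J))) := by ring
        rw [e2, abs_neg, abs_mul, abs_of_pos ht]
        calc t * |2 * p (i + J + 1) - p (i + J)| ≤ t * (ε₁ * p (i + J)) :=
              mul_le_mul_of_nonneg_left this ht.le
          _ = ε₁ * (t * p (i + J)) := by ring
      have h3 : t * p (i + J) * Real.exp (-(t / 2 * p (i + J))) ≤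
          5 * (Real.exp (-(t / 2 * p (i + J + 1))) - Real.exp (-(t / 2 * p (i + J)))) := by
        have hx : (0:ℝ) ≤ t / 2 * p (i + J) :=
          mul_nonneg (by linarith) (hpos (i + J)).le
        have hy : t / 2 * p (i + J + 1) ≤ (3/5) * (t / 2 * p (i + J)) := by
          have hc := hC (i + J) hiJ
          calc t / 2 * p (i + J + 1) ≤ t / 2 * (3 / 5 * p (i + J)) :=
                mul_le_mul_of_nonneg_left hc (by linarith)
            _ = (3/5) * (t / 2 * p (i + J)) := by ring
        have hk := my_telescope_bound hx hy
        have e3 : t * p (i + J) * Real.exp (-(t / 2 * p (i + J)))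
            = 2 * (t / 2 * p (i + J) * Real.exp (-(t / 2 * p (i + J)))) := by ring
        rw [e3]
        linarith
      calc |E (i + (J + 1))| ≤ ε₁ * (t * p (i + J)) * Real.exp (-(t / 2 * p (i + J))) := by
            refine habs.trans ?_
            apply mul_le_mul_of_nonneg_right h2 (Real.exp_nonneg _)
        _ = ε₁ * (t * p (i + J) * Real.exp (-(t / 2 * p (i + J)))) := by ring
        _ ≤ ε₁ * (5 * (Real.exp (-(t / 2 * p (i + J + 1))) - Real.exp (-(t / 2 * p (i + J))))) :=
            mul_le_mul_of_nonneg_left h3 hε₁pos.le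
        _ = 5 * ε₁ * (Real.exp (-(t / 2 * p (i + J + 1))) - Real.exp (-(t / 2 * p (i + J)))) := by
            ring
    calc ∑ i ∈ Finset.range n, |E (i + (J + 1))|
        ≤ ∑ i ∈ Finset.range n, 5 * ε₁ *
            (Real.exp (-(t / 2 * p (i + J + 1))) - Real.exp (-(t / 2 * p (i + J)))) :=
          Finset.sum_le_sum fun i _ => hterm i
      _ = 5 * ε₁ * ∑ i ∈ Finset.range n,
            (Real.exp (-(t / 2 * p (i + J + 1))) - Real.exp (-(t / 2 * p (i + J)))) := by
          rw [Finset.mul_sum]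
      _ ≤ 5 * ε₁ := by
          have := Finset.sum_range_sub (f := fun i => Real.exp (-(t / 2 * p (i + J)))) n
          have hsumeq : ∑ i ∈ Finset.range n,
              (Real.exp (-(t / 2 * p (i + J + 1))) - Real.exp (-(t / 2 * p (i + J))))
              = Real.exp (-(t / 2 * p (n + J))) - Real.exp (-(t / 2 * p (0 + J))) := by
            rw [← this]
            exact Finset.sum_congr rfl fun i _ => by norm_num [Nat.add_right_comm]
          rw [hsumeq]
          have h1 : Real.exp (-(t / 2 * p (n + J))) ≤ 1 := by
            rw [show (1:ℝ) = Real.exp 0 by simp]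
            apply Real.exp_le_exp.mpr
            nlinarith [hpos (n + J)]
          nlinarith [Real.exp_pos (-(t / 2 * p (0 + J))), hε₁pos.le]
  -- head bound
  have hhead : ∑ j ∈ Finset.range (J + 1), |E j| ≤
      ∑ j ∈ Finset.range (J + 1), (Real.exp (-(t * q j)) + Real.exp (-(2 * t * p j))) := by
    apply Finset.sum_le_sum
    intro j _
    rw [hEdef]
    refine (abs_sub _ _).trans ?_
    rw [abs_of_nonneg (Real.exp_nonneg _), abs_of_nonneg (Real.exp_nonneg _)]
  -- combine
  have hsplit := Summable.sum_add_tsum_nat_add (J + 1) habsE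
  have hEbound2 : |∑' j, E j| ≤ ∑' j, |E j| := by
    simpa [Real.norm_eq_abs] using norm_tsum_le_tsum_norm (f := E) (by simpa using habsE)
  rw [Real.dist_eq, hdecomp]
  have key : |(1 - Real.exp (-(2 * t * p 0)) + ∑' j, E j) - 1| ≤
      Real.exp (-(2 * t * p 0)) + ∑' j, |E j| := by
    have : (1 - Real.exp (-(2 * t * p 0)) + ∑' j, E j) - 1
        = (∑' j, E j) - Real.exp (-(2 * t * p 0)) := by ring
    rw [this]
    refine (abs_sub _ _).trans ?_
    rw [abs_of_nonneg (Real.exp_nonneg _)]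
    linarith [hEbound2]
  refine lt_of_le_of_lt key ?_
  rw [← hsplit]
  have : Real.exp (-(2 * t * p 0)) +
      (∑ j ∈ Finset.range (J + 1), |E j| + ∑' i, |E (i + (J + 1))|)
      ≤ (Real.exp (-(2 * t * p 0)) + ∑ j ∈ Finset.range (J + 1),
        (Real.exp (-(t * q j)) + Real.exp (-(2 * t * p j)))) + 5 * ε₁ := by
    linarith [hhead, htail]
  refine lt_of_le_of_lt this ?_
  have : 5 * ε₁ ≤ ε / 4 := by linarith
  linarith [hHt]
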